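/- Fix an integer n ≥ 4 and a real number r0 > 0, define b : (r0, ∞) → ℝ by b(s) = r0 · ∫_{s/r0}^∞ (t^{2n−4} − 1)^{−1/2} dt, and define Υ : {x ∈ ℝⁿ : ‖x‖ > r0} → ℝ by Υ(x) = b(‖x‖). Let q assign to each x with ‖x‖ > r0 a symmetric n×n real matrix q(x) satisfying n · ‖q(x)‖ < r0^{n−2} · ‖x‖^{1−n}, where ‖q(x)‖ is the Frobenius norm. Then for every real λ with |λ| ≤ 1 and every x with ‖x‖ > r0, writing p for the gradient of Υ at x and H for the Hessian matrix of Υ at x, one has Σ_{i,j} (δ_{ij} − (1 + ‖p‖²)^{−1} p_i p_j) · ((1 + ‖p‖²)^{−1/2} H_{ij} − λ·q(x)_{ij}) < 0. In particular, Υ is a strict supersolution of the Jang equation with data ±q on the exterior region {‖x‖ > r0} in Euclidean space. -/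

import Mathlib

/-- The Schoen-Yau/Eichmair barrier profile
`b(s) = r0 · ∫_{s/r0}^∞ (t^{2n-4} - 1)^{-1/2} dt`. -/
noncomputable def jangB (n : ℕ) (r0 : ℝ) (s : ℝ) : ℝ :=
  r0 * ∫ t in Set.Ioi (s / r0), (t ^ (2 * n - 4) - 1) ^ (-(1 / 2) : ℝ)

/-- The partial derivative of `f : ℝⁿ → ℝ` in the `i`-th coordinate direction. -/
noncomputable def pder {n : ℕ} (f : EuclideanSpace ℝ (Fin n) → ℝ) (i : Fin n)
    (x : EuclideanSpace ℝ (Fin n)) : ℝ :=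
  fderiv ℝ f x (EuclideanSpace.single i 1)

open Set MeasureTheory Real Filter Topology

/- ----------------- auxiliary 1D material ----------------- -/

noncomputable def jFF (m : ℕ) (t : ℝ) : ℝ := (t ^ m - 1) ^ (-(1 / 2) : ℝ)
noncomputable def jFFd (m : ℕ) (t : ℝ) : ℝ :=
  ↑m * t ^ (m - 1) * (-(1 / 2)) * (t ^ m - 1) ^ ((-(1 / 2) : ℝ) - 1)

lemma jFF_pos {m : ℕ} (hm : 1 ≤ m) {t : ℝ} (ht : 1 < t) : 0 < t ^ m - 1 := by
  have : 1 < t ^ m := one_lt_pow₀ ht (by omega)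
  linarith

lemma jFF_contOn {m : ℕ} (hm : 1 ≤ m) : ContinuousOn (jFF m) (Ioi 1) := by
  apply ContinuousOn.rpow_const
  · exact (continuous_pow m).continuousOn.sub continuousOn_const
  · intro t ht
    exact Or.inl (ne_of_gt (jFF_pos hm ht))

lemma jFF_integrableOn {m : ℕ} (hm : 4 ≤ m) {a : ℝ} (ha : 1 < a) :
    IntegrableOn (jFF m) (Ioi a) := by
  have ha0 : (0:ℝ) < a := lt_trans one_pos ha
  obtain ⟨c, hc⟩ : ∃ c : ℝ, c = 1 - (a ^ 4)⁻¹ := ⟨_, rfl⟩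
  have ha4 : (1:ℝ) < a ^ 4 := one_lt_pow₀ ha (by norm_num)
  have hcpos : 0 < c := by
    have : (a ^ 4)⁻¹ < 1 := inv_lt_one_of_one_lt₀ ha4
    rw [hc]; linarith
  have hbound : ∀ t ∈ Ioi a, ‖jFF m t‖ ≤ c ^ (-(1/2) : ℝ) * t ^ (-2 : ℝ) := by
    intro t ht
    have hta : a < t := ht
    have ht1 : 1 < t := lt_trans ha hta
    have ht0 : 0 < t := lt_trans one_pos ht1
    have h1 : c * t ^ 4 ≤ t ^ m - 1 := by
      have h2 : t ^ 4 ≤ t ^ m := pow_le_pow_right₀ ht1.le hm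
      have h3 : 1 ≤ (a ^ 4)⁻¹ * t ^ 4 := by
        rw [inv_mul_eq_div, le_div_iff₀ (by positivity), one_mul]
        exact pow_le_pow_left₀ ha0.le hta.le 4
      have hce : c * t ^ 4 = t ^ 4 - (a ^ 4)⁻¹ * t ^ 4 := by rw [hc]; ring
      linarith
    have hct : 0 < c * t ^ 4 := by positivity
    have h4 : jFF m t ≤ (c * t ^ 4) ^ (-(1/2) : ℝ) :=
      Real.rpow_le_rpow_of_nonpos hct h1 (by norm_num)
    have h5 : (c * t ^ 4) ^ (-(1/2) : ℝ) = c ^ (-(1/2) : ℝ) * t ^ (-2 : ℝ) := by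
      rw [Real.mul_rpow hcpos.le (by positivity), ← Real.rpow_natCast t 4,
        ← Real.rpow_mul ht0.le]
      norm_num
    have h6 : 0 ≤ jFF m t := Real.rpow_nonneg (by linarith [jFF_pos (by omega : 1 ≤ m) ht1]) _
    rw [Real.norm_of_nonneg h6]
    linarith [h4, le_of_eq h5]
  have hg : IntegrableOn (fun t : ℝ => c ^ (-(1/2) : ℝ) * t ^ (-2 : ℝ)) (Ioi a) :=
    (integrableOn_Ioi_rpow_of_lt (by norm_num) ha0).const_mul _
  refine Integrable.mono' hg ?_ ?_
  · exact ((jFF_contOn (by omega)).mono (Ioi_subset_Ioi ha.le)).aestronglyMeasurable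
      measurableSet_Ioi
  · exact (ae_restrict_iff' measurableSet_Ioi).mpr (ae_of_all _ hbound)

lemma jFF_hasDerivAt_integral {m : ℕ} (hm : 4 ≤ m) {s : ℝ} (hs : 1 < s) :
    HasDerivAt (fun u => ∫ t in Ioi u, jFF m t) (-(jFF m s)) s := by
  obtain ⟨c, hcdef⟩ : ∃ c : ℝ, c = (1 + s) / 2 := ⟨_, rfl⟩
  have hc1 : 1 < c := by rw [hcdef]; linarith
  have hcs : c < s := by rw [hcdef]; linarith
  have key : ∀ u ∈ Ioi c, (∫ t in Ioi u, jFF m t)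
      = (∫ t in Ioi c, jFF m t) - ∫ t in c..u, jFF m t := by
    intro u hu
    have hcu : c ≤ u := le_of_lt hu
    have h1 : IntegrableOn (jFF m) (Ioi c) := jFF_integrableOn hm hc1
    have hsplit : (∫ t in Ioi c, jFF m t)
        = (∫ t in Ioc c u, jFF m t) + ∫ t in Ioi u, jFF m t := by
      rw [← setIntegral_union (Ioc_disjoint_Ioi le_rfl) measurableSet_Ioi
        (h1.mono_set Ioc_subset_Ioi_self) (h1.mono_set (Ioi_subset_Ioi hcu)),
        Ioc_union_Ioi_eq_Ioi hcu]
    rw [intervalIntegral.integral_of_le hcu]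
    linarith [hsplit]
  have hInt : IntervalIntegrable (jFF m) volume c s := by
    rw [intervalIntegrable_iff_integrableOn_Ioc_of_le hcs.le]
    exact (jFF_integrableOn hm hc1).mono_set Ioc_subset_Ioi_self
  have hca : ContinuousAt (jFF m) s :=
    (jFF_contOn (by omega : 1 ≤ m)).continuousAt (Ioi_mem_nhds hs)
  have hmeas : StronglyMeasurableAtFilter (jFF m) (𝓝 s) :=
    (jFF_contOn (by omega : 1 ≤ m)).stronglyMeasurableAtFilter isOpen_Ioi s hs
  have hD : HasDerivAt (fun u => (∫ t in Ioi c, jFF m t) - ∫ t in c..u, jFF m t)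
      (-(jFF m s)) s :=
    (intervalIntegral.integral_hasDerivAt_right hInt hmeas hca).const_sub _
  apply hD.congr_of_eventuallyEq
  filter_upwards [Ioi_mem_nhds hcs] with u hu using key u hu

lemma jFF_hasDerivAt {m : ℕ} (hm : 1 ≤ m) {t : ℝ} (ht : 1 < t) :
    HasDerivAt (jFF m) (jFFd m t) t := by
  have h := ((hasDerivAt_pow m t).sub_const 1).rpow_const
    (p := (-(1 / 2) : ℝ)) (Or.inl (ne_of_gt (jFF_pos hm ht)))
  unfold jFF jFFd
  convert h using 2

lemma jangB_hasDerivAt (n : ℕ) (hn : 4 ≤ n) (r0 : ℝ) (hr0 : 0 < r0) {s : ℝ} (hs : r0 < s) :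
    HasDerivAt (jangB n r0) (-(jFF (2 * n - 4) (s / r0))) s := by
  have hm : 4 ≤ 2 * n - 4 := by omega
  have hu : 1 < s / r0 := (one_lt_div hr0).mpr hs
  have h0 : HasDerivAt (fun v : ℝ => v / r0) (1 / r0) s := by
    simpa using (hasDerivAt_id s).div_const r0
  have hI := (jFF_hasDerivAt_integral hm hu).comp s h0
  have h2 := hI.const_mul r0
  have h3 : r0 * (-(jFF (2 * n - 4) (s / r0)) * (1 / r0)) = -(jFF (2 * n - 4) (s / r0)) := by
    field_simp
  rw [h3] at h2
  exact h2

lemma bp_hasDerivAt (m : ℕ) (hm : 4 ≤ m) (r0 : ℝ) (hr0 : 0 < r0) {s : ℝ} (hs : r0 < s) :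
    HasDerivAt (fun v => -(jFF m (v / r0))) (-(jFFd m (s / r0) * (1 / r0))) s := by
  have hu : 1 < s / r0 := (one_lt_div hr0).mpr hs
  have h0 : HasDerivAt (fun v : ℝ => v / r0) (1 / r0) s := by
    simpa using (hasDerivAt_id s).div_const r0
  exact ((jFF_hasDerivAt (m := m) (by omega) hu).comp s h0).neg

/- ----------------- multivariate derivative formulas ----------------- -/

lemma norm_hasFDerivAt {n : ℕ} {x : EuclideanSpace ℝ (Fin n)} (hx : x ≠ 0) :
    HasFDerivAt (fun y : EuclideanSpace ℝ (Fin n) => ‖y‖) (‖x‖⁻¹ • innerSL ℝ x) x := by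
  have h1 : HasFDerivAt (fun y : EuclideanSpace ℝ (Fin n) => ‖y‖ ^ 2) (2 • innerSL ℝ x) x :=
    (hasStrictFDerivAt_norm_sq x).hasFDerivAt
  have hn : ‖x‖ ≠ 0 := norm_ne_zero_iff.mpr hx
  have h2 : HasDerivAt Real.sqrt (1 / (2 * Real.sqrt (‖x‖ ^ 2))) (‖x‖ ^ 2) :=
    Real.hasDerivAt_sqrt (by positivity)
  have h3 := h2.comp_hasFDerivAt x h1
  have he : (fun y : EuclideanSpace ℝ (Fin n) => Real.sqrt (‖y‖ ^ 2)) = fun y => ‖y‖ := by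
    funext y; rw [Real.sqrt_sq (norm_nonneg y)]
  rw [Function.comp_def, he] at h3
  refine h3.congr_fderiv ?_
  rw [Real.sqrt_sq (norm_nonneg x)]
  ext v
  simp [smul_smul]
  ring

lemma ups_hasFDerivAt (n : ℕ) (hn : 4 ≤ n) (r0 : ℝ) (hr0 : 0 < r0)
    {y : EuclideanSpace ℝ (Fin n)} (hy : r0 < ‖y‖) :
    HasFDerivAt (fun z => jangB n r0 ‖z‖)
      ((-(jFF (2 * n - 4) (‖y‖ / r0))) • (‖y‖⁻¹ • innerSL ℝ y)) y := by
  have hynz : y ≠ 0 := by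
    intro h; rw [h, norm_zero] at hy; exact absurd hy (not_lt.mpr hr0.le)
  have h := (jangB_hasDerivAt n hn r0 hr0 hy).comp_hasFDerivAt y (norm_hasFDerivAt hynz)
  rw [Function.comp_def] at h
  exact h

lemma grad_formula (n : ℕ) (hn : 4 ≤ n) (r0 : ℝ) (hr0 : 0 < r0)
    {y : EuclideanSpace ℝ (Fin n)} (hy : r0 < ‖y‖) (j : Fin n) :
    fderiv ℝ (fun z => jangB n r0 ‖z‖) y (EuclideanSpace.single j 1)
      = -(jFF (2 * n - 4) (‖y‖ / r0)) / ‖y‖ * y j := by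
  rw [(ups_hasFDerivAt n hn r0 hr0 hy).fderiv]
  simp [EuclideanSpace.inner_single_right, real_inner_comm]
  ring

lemma hess_formula (n : ℕ) (hn : 4 ≤ n) (r0 : ℝ) (hr0 : 0 < r0)
    {x : EuclideanSpace ℝ (Fin n)} (hx : r0 < ‖x‖) (i j : Fin n) :
    fderiv ℝ (fun y => fderiv ℝ (fun z => jangB n r0 ‖z‖) y (EuclideanSpace.single j 1)) x
      (EuclideanSpace.single i 1)
    = ((-(jFFd (2 * n - 4) (‖x‖ / r0) * (1 / r0))) * ‖x‖ - -(jFF (2 * n - 4) (‖x‖ / r0)) * 1)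
          / ‖x‖ ^ 2 * (‖x‖⁻¹ * x i) * x j
      + -(jFF (2 * n - 4) (‖x‖ / r0)) / ‖x‖ * (if i = j then 1 else 0) := by
  have hm : 4 ≤ 2 * n - 4 := by omega
  have hxnz : x ≠ 0 := by
    intro h; rw [h, norm_zero] at hx; exact absurd hx (not_lt.mpr hr0.le)
  have hsne : ‖x‖ ≠ 0 := norm_ne_zero_iff.mpr hxnz
  have hrad : HasDerivAt (fun v : ℝ => -(jFF (2 * n - 4) (v / r0)) / v)
      ((-(jFFd (2 * n - 4) (‖x‖ / r0) * (1 / r0)) * ‖x‖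
        - -(jFF (2 * n - 4) (‖x‖ / r0)) * 1) / ‖x‖ ^ 2) ‖x‖ :=
    (bp_hasDerivAt _ hm r0 hr0 hx).div (hasDerivAt_id _) hsne
  have hA : HasFDerivAt (fun y : EuclideanSpace ℝ (Fin n) => -(jFF (2 * n - 4) (‖y‖ / r0)) / ‖y‖)
      (((-(jFFd (2 * n - 4) (‖x‖ / r0) * (1 / r0)) * ‖x‖
        - -(jFF (2 * n - 4) (‖x‖ / r0)) * 1) / ‖x‖ ^ 2) • (‖x‖⁻¹ • innerSL ℝ x)) x := by
    have h := hrad.comp_hasFDerivAt x (norm_hasFDerivAt hxnz)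
    rw [Function.comp_def] at h
    exact h
  have hproj : HasFDerivAt (fun y : EuclideanSpace ℝ (Fin n) => y j)
      ((EuclideanSpace.proj j : EuclideanSpace ℝ (Fin n) →L[ℝ] ℝ)) x :=
    (EuclideanSpace.proj j : EuclideanSpace ℝ (Fin n) →L[ℝ] ℝ).hasFDerivAt
  have hG : HasFDerivAt (fun y : EuclideanSpace ℝ (Fin n) =>
      -(jFF (2 * n - 4) (‖y‖ / r0)) / ‖y‖ * y j) _ x := hA.mul hproj
  have hopen : IsOpen {y : EuclideanSpace ℝ (Fin n) | r0 < ‖y‖} :=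
    isOpen_lt continuous_const continuous_norm
  have hev : (fun y => fderiv ℝ (fun z => jangB n r0 ‖z‖) y (EuclideanSpace.single j 1))
      =ᶠ[𝓝 x] (fun y => -(jFF (2 * n - 4) (‖y‖ / r0)) / ‖y‖ * y j) := by
    filter_upwards [hopen.mem_nhds hx] with y hy using grad_formula n hn r0 hr0 hy j
  rw [hev.fderiv_eq, hG.fderiv]
  by_cases h : i = j
  · subst h
    simp [EuclideanSpace.single_apply, EuclideanSpace.inner_single_right]
    ring
  · simp [EuclideanSpace.single_apply, EuclideanSpace.inner_single_right, h, Ne.symm h]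
    ring

/- ----------------- algebraic lemmas ----------------- -/

lemma sum_eval (n : ℕ) (x : Fin n → ℝ) (q : Fin n → Fin n → ℝ) (c d k β lam : ℝ) :
    ∑ i, ∑ j, ((if i = j then (1:ℝ) else 0) - c * (k * x i) * (k * x j))
        * (d * (β * x i * x j + k * (if i = j then (1:ℝ) else 0)) - lam * q i j)
    = d * (β * (∑ i, x i ^ 2) + k * n
        - c * k ^ 2 * β * (∑ i, x i ^ 2) ^ 2 - c * k ^ 2 * k * (∑ i, x i ^ 2))
      - lam * (∑ i, ∑ j,
          ((if i = j then (1:ℝ) else 0) - c * (k * x i) * (k * x j)) * q i j) := by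
  have expand : ∀ i j : Fin n,
      ((if i = j then (1:ℝ) else 0) - c * (k * x i) * (k * x j))
        * (d * (β * x i * x j + k * (if i = j then (1:ℝ) else 0)) - lam * q i j)
      = (if i = j then d * (β * x i ^ 2 + k) - lam * q i j else 0)
        - (c * k ^ 2 * d * β) * ((x i ^ 2) * (x j ^ 2))
        - (if i = j then (c * k ^ 2 * d * k) * x i ^ 2 else 0)
        + lam * ((c * (k * x i) * (k * x j)) * q i j) := by
    intro i j
    by_cases h : i = j
    · subst h; simp; ring
    · simp [h]; ring
  simp only [expand, Finset.sum_add_distrib, Finset.sum_sub_distrib,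
    Finset.sum_ite_eq, Finset.sum_ite_eq', Finset.mem_univ, if_true, ← Finset.sum_mul,
    ← Finset.mul_sum]
  have h2 : ∀ i j : Fin n, ((if i = j then (1:ℝ) else 0) - c * (k * x i) * (k * x j)) * q i j
      = (if i = j then q i j else 0) - (c * (k * x i) * (k * x j)) * q i j := by
    intro i j; by_cases h : i = j <;> simp [h] <;> ring
  simp only [h2, Finset.sum_sub_distrib, Finset.sum_ite_eq', Finset.mem_univ, if_true]
  simp only [Finset.sum_ite_eq, Finset.mem_univ, if_true, Finset.sum_const,
    Finset.card_univ, Fintype.card_fin, nsmul_eq_mul]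
  ring

lemma qCS (n : ℕ) (x : Fin n → ℝ) (q : Fin n → Fin n → ℝ) (c k : ℝ)
    (ht0 : 0 ≤ c * k ^ 2 * (∑ i, x i ^ 2)) (ht2 : c * k ^ 2 * (∑ i, x i ^ 2) ≤ 2) :
    |∑ i, ∑ j, ((if i = j then (1:ℝ) else 0) - c * (k * x i) * (k * x j)) * q i j|
      ≤ Real.sqrt n * Real.sqrt (∑ i, ∑ j, q i j ^ 2) := by
  obtain ⟨A, hA⟩ : ∃ A : Fin n → Fin n → ℝ,
      A = fun i j => (if i = j then (1:ℝ) else 0) - c * (k * x i) * (k * x j) := ⟨_, rfl⟩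
  rw [show (∑ i, ∑ j, ((if i = j then (1:ℝ) else 0) - c * (k * x i) * (k * x j)) * q i j)
      = ∑ i, ∑ j, A i j * q i j by rw [hA]]
  have hA2 : ∑ i, ∑ j, (A i j) ^ 2 ≤ n := by
    have expand : ∀ i j : Fin n, (A i j) ^ 2
        = (if i = j then (1:ℝ) - 2 * (c * k ^ 2) * x i ^ 2 else 0)
          + (c * k ^ 2) ^ 2 * (x i ^ 2 * x j ^ 2) := by
      intro i j
      by_cases h : i = j
      · subst h; simp [hA]; ring
      · simp [hA, h]; ring
    simp only [expand, Finset.sum_add_distrib, Finset.sum_ite_eq, Finset.sum_ite_eq',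
      Finset.mem_univ, if_true, ← Finset.mul_sum, ← Finset.sum_mul, Finset.sum_sub_distrib,
      Finset.sum_const, Finset.card_univ, Fintype.card_fin, nsmul_eq_mul, mul_one]
    nlinarith [ht0, ht2, sq_nonneg (∑ i, x i ^ 2)]
  have flat : ∀ f : Fin n → Fin n → ℝ, (∑ i, ∑ j, f i j)
      = ∑ p : Fin n × Fin n, f p.1 p.2 := fun f =>
    (Fintype.sum_prod_type (f := fun p : Fin n × Fin n => f p.1 p.2)).symm
  have hCS := Finset.sum_mul_sq_le_sq_mul_sq Finset.univ
    (fun p : Fin n × Fin n => A p.1 p.2) (fun p => q p.1 p.2)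
  have h1 : |∑ i, ∑ j, A i j * q i j|
      ≤ Real.sqrt (∑ i, ∑ j, (A i j) ^ 2) * Real.sqrt (∑ i, ∑ j, q i j ^ 2) := by
    rw [flat (fun i j => A i j * q i j), flat (fun i j => (A i j) ^ 2),
      flat (fun i j => q i j ^ 2)]
    rw [← Real.sqrt_sq_eq_abs, ← Real.sqrt_mul (by positivity)]
    exact Real.sqrt_le_sqrt hCS
  refine h1.trans (mul_le_mul_of_nonneg_right ?_ (Real.sqrt_nonneg _))
  exact Real.sqrt_le_sqrt hA2

lemma geom_eval (n : ℕ) (hn : 4 ≤ n) (r0 s u g k β c d : ℝ)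
    (hr0 : 0 < r0) (hs : r0 < s)
    (hu : u = s / r0) (hg : g = u ^ (2 * n - 4) - 1)
    (hk : k = -(jFF (2 * n - 4) u) / s)
    (hβ : β = (-(jFFd (2 * n - 4) u * (1 / r0)) * s - -(jFF (2 * n - 4) u) * 1) / s ^ 2 * s⁻¹)
    (hc : c = (1 + g⁻¹)⁻¹) (hd : d = (1 + g⁻¹) ^ (-(1 / 2) : ℝ)) :
    d * (β * s ^ 2 + k * n - c * k ^ 2 * β * (s ^ 2) ^ 2 - c * k ^ 2 * k * s ^ 2)
      = -(r0 ^ ((n : ℝ) - 2) * s ^ ((1 : ℝ) - n)) := by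
  have hs0 : 0 < s := lt_trans hr0 hs
  have hu1 : 1 < u := by rw [hu]; exact (one_lt_div hr0).mpr hs
  have hu0 : 0 < u := lt_trans one_pos hu1
  have hgpos : 0 < g := by rw [hg]; exact jFF_pos (by omega) hu1
  have hg1 : 0 < g + 1 := by linarith
  obtain ⟨X, hX⟩ : ∃ X : ℝ, X = g ^ ((1 : ℝ) / 2) := ⟨_, rfl⟩
  obtain ⟨Y, hY⟩ : ∃ Y : ℝ, Y = u ^ (n - 2) := ⟨_, rfl⟩
  have hXpos : 0 < X := by rw [hX]; positivity
  have hYpos : 0 < Y := by rw [hY]; positivity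
  have f1 : X ^ 2 = g := by
    rw [hX, ← Real.rpow_natCast (g ^ ((1 : ℝ) / 2)) 2, ← Real.rpow_mul hgpos.le]
    norm_num
  have f2 : Y ^ 2 = g + 1 := by
    rw [hY, ← pow_mul, hg]
    have : (n - 2) * 2 = 2 * n - 4 := by omega
    rw [this]; ring
  have f3 : jFF (2 * n - 4) u = X⁻¹ := by
    rw [jFF, ← hg, hX, ← Real.rpow_neg hgpos.le]
  have f4 : jFFd (2 * n - 4) u
      = ↑(2 * n - 4) * u ^ (2 * n - 4 - 1) * (-(1 / 2)) * (X * g)⁻¹ := by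
    rw [jFFd, ← hg]
    congr 1
    rw [show ((-(1 / 2) : ℝ) - 1) = -(1 / 2 + 1) by norm_num, Real.rpow_neg hgpos.le,
      Real.rpow_add hgpos, Real.rpow_one, hX]
  have f5 : u ^ (2 * n - 4 - 1) = (g + 1) / u := by
    rw [eq_div_iff (ne_of_gt hu0), ← pow_succ]
    have : 2 * n - 4 - 1 + 1 = 2 * n - 4 := by omega
    rw [this, hg]; ring
  have f6 : ((2 * n - 4 : ℕ) : ℝ) = 2 * (n : ℝ) - 4 := by
    have h4 : (4 : ℕ) ≤ 2 * n := by omega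
    push_cast [Nat.cast_sub h4]
    ring
  have f7 : d = X / Y := by
    have h1 : (1 + g⁻¹) = (g + 1) / g := by field_simp
    have h2 : (g + 1) ^ ((1 : ℝ) / 2) = Y := by
      rw [← f2, ← Real.rpow_natCast Y 2, ← Real.rpow_mul hYpos.le]
      norm_num
    rw [hd, h1, Real.div_rpow hg1.le hgpos.le, Real.rpow_neg hg1.le,
      Real.rpow_neg hgpos.le, h2, ← hX]
    field_simp
  have f8 : s = u * r0 := by rw [hu]; field_simp
  have g1 : β * s ^ 2 + k = -(jFFd (2 * n - 4) u * (1 / r0)) := by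
    rw [hβ, hk]; field_simp; ring
  have g0 : k ^ 2 * s ^ 2 = g⁻¹ := by
    rw [hk, f3, ← f1]; field_simp
  have g3 : 1 - c * (k ^ 2 * s ^ 2) = g / (g + 1) := by
    rw [g0, hc]; field_simp; ring
  have g4 : β * s ^ 2 + k * n - c * k ^ 2 * β * (s ^ 2) ^ 2 - c * k ^ 2 * k * s ^ 2
      = (β * s ^ 2 + k) * (1 - c * (k ^ 2 * s ^ 2)) + ((n : ℝ) - 1) * k := by ring
  have g5 : -(jFFd (2 * n - 4) u * (1 / r0)) * (g / (g + 1))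
      = (((2 * n - 4 : ℕ) : ℝ) / 2) / (s * X) := by
    rw [f4, f5, f8]
    field_simp
  have g7 : (((2 * n - 4 : ℕ) : ℝ) / 2) / (s * X) + ((n : ℝ) - 1) * k = -(1 / (s * X)) := by
    rw [hk, f3, f6]
    field_simp
    ring
  have g8 : d * -(1 / (s * X)) = -(1 / (s * Y)) := by
    rw [f7]; field_simp
  have hle2 : (2 : ℕ) ≤ n := by omega
  have e9 : r0 ^ ((n : ℝ) - 2) = r0 ^ (n - 2 : ℕ) := by
    rw [show ((n : ℝ) - 2) = ((n - 2 : ℕ) : ℝ) by push_cast [Nat.cast_sub hle2]; ring,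
      Real.rpow_natCast]
  have e10 : s ^ ((1 : ℝ) - n) = (s ^ (n - 1 : ℕ))⁻¹ := by
    rw [show ((1 : ℝ) - n) = -(((n - 1 : ℕ) : ℝ)) by
        push_cast [Nat.cast_sub (show (1:ℕ) ≤ n by omega)]; ring,
      Real.rpow_neg hs0.le, Real.rpow_natCast]
  have e11 : s ^ (n - 1 : ℕ) = Y * r0 ^ (n - 2 : ℕ) * s := by
    have h1 : s ^ (n - 1 : ℕ) = s ^ (n - 2 : ℕ) * s := by
      rw [← pow_succ]; congr 1; omega
    rw [h1, f8, mul_pow, ← f8, ← hY]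
  have e12 : -(r0 ^ ((n : ℝ) - 2) * s ^ ((1 : ℝ) - n)) = -(1 / (s * Y)) := by
    rw [e9, e10, e11]
    have hr0n : (0:ℝ) < r0 ^ (n - 2 : ℕ) := by positivity
    field_simp
  rw [g4, g1, g3, g5, g7, g8, e12]

/-- Euclidean version of Proposition `barrier`: let `Υ(x) = b(‖x‖)`
on `{‖x‖ > r0}` and let `q` assign to each such `x` a symmetric matrix with
`n · ‖q(x)‖_F < r0^{n-2} ‖x‖^{1-n}`. Then for every `λ` with `|λ| ≤ 1`,
`∑_{i,j} (δ_{ij} - (1+‖p‖²)⁻¹ p_i p_j) ((1+‖p‖²)^{-1/2} H_{ij} - λ q(x)_{ij}) < 0`,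
where `p` is the gradient and `H` the Hessian of `Υ` at `x`; i.e. `Υ` is a strict
supersolution of the Jang equation with data `±q` on `{‖x‖ > r0}`. -/
theorem barrier_strict_supersolution (n : ℕ) (hn : 4 ≤ n) (r0 : ℝ) (hr0 : 0 < r0)
    (q : EuclideanSpace ℝ (Fin n) → Matrix (Fin n) (Fin n) ℝ)
    (hq_symm : ∀ x : EuclideanSpace ℝ (Fin n), r0 < ‖x‖ → (q x).IsSymm)
    (hq_bound : ∀ x : EuclideanSpace ℝ (Fin n), r0 < ‖x‖ →
      (n : ℝ) * Real.sqrt (∑ i, ∑ j, (q x i j) ^ 2)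
        < r0 ^ ((n : ℝ) - 2) * ‖x‖ ^ ((1 : ℝ) - n))
    (lam : ℝ) (hlam : |lam| ≤ 1)
    (x : EuclideanSpace ℝ (Fin n)) (hx : r0 < ‖x‖)
    (p : Fin n → ℝ) (hp : ∀ i, p i = pder (fun y => jangB n r0 ‖y‖) i x)
    (H : Fin n → Fin n → ℝ)
    (hH : ∀ i j, H i j = pder (pder (fun y => jangB n r0 ‖y‖) j) i x) :
    ∑ i, ∑ j,
        ((if i = j then (1 : ℝ) else 0) - (1 + ∑ k, p k ^ 2)⁻¹ * p i * p j)
          * ((1 + ∑ k, p k ^ 2) ^ (-(1 / 2) : ℝ) * H i j - lam * q x i j)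
      < 0 := by
  have hs0 : 0 < ‖x‖ := lt_trans hr0 hx
  have hu1 : 1 < ‖x‖ / r0 := (one_lt_div hr0).mpr hx
  obtain ⟨g, hgdef⟩ : ∃ g : ℝ, g = (‖x‖ / r0) ^ (2 * n - 4) - 1 := ⟨_, rfl⟩
  have hgpos : 0 < g := by rw [hgdef]; exact jFF_pos (by omega) hu1
  obtain ⟨k, hkdef⟩ : ∃ k : ℝ, k = -(jFF (2 * n - 4) (‖x‖ / r0)) / ‖x‖ := ⟨_, rfl⟩
  obtain ⟨β, hβdef⟩ : ∃ β : ℝ,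
      β = (-(jFFd (2 * n - 4) (‖x‖ / r0) * (1 / r0)) * ‖x‖
        - -(jFF (2 * n - 4) (‖x‖ / r0)) * 1) / ‖x‖ ^ 2 * ‖x‖⁻¹ := ⟨_, rfl⟩
  -- gradient entries
  have hpf : ∀ i, p i = k * x i := by
    intro i
    rw [hp i, hkdef]
    show fderiv ℝ (fun y => jangB n r0 ‖y‖) x (EuclideanSpace.single i 1) = _
    rw [grad_formula n hn r0 hr0 hx i]
  -- hessian entries
  have hHf : ∀ i j, H i j = β * x i * x j + k * (if i = j then (1:ℝ) else 0) := by
    intro i j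
    rw [hH i j]
    show fderiv ℝ (fun y => fderiv ℝ (fun z => jangB n r0 ‖z‖) y (EuclideanSpace.single j 1))
        x (EuclideanSpace.single i 1) = _
    rw [hess_formula n hn r0 hr0 hx i j, hkdef, hβdef]
    ring
  -- sum of squares of coordinates
  have hSx : (∑ i, x i ^ 2) = ‖x‖ ^ 2 := by
    rw [EuclideanSpace.norm_eq, Real.sq_sqrt (by positivity)]
    exact Finset.sum_congr rfl fun i _ => by rw [Real.norm_eq_abs, sq_abs]
  have hj2 : (jFF (2 * n - 4) (‖x‖ / r0)) ^ 2 = g⁻¹ := by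
    rw [jFF, ← hgdef, ← Real.rpow_natCast (g ^ (-(1/2) : ℝ)) 2, ← Real.rpow_mul hgpos.le]
    norm_num
    rw [Real.rpow_neg_one]
  have g0 : k ^ 2 * ‖x‖ ^ 2 = g⁻¹ := by
    have hk2 : k ^ 2 = jFF (2 * n - 4) (‖x‖ / r0) ^ 2 / ‖x‖ ^ 2 := by rw [hkdef]; ring
    rw [hk2, hj2, div_mul_cancel₀ _ (pow_ne_zero 2 (ne_of_gt hs0))]
  have hsum : (∑ i, p i ^ 2) = g⁻¹ := by
    simp only [hpf, mul_pow, ← Finset.mul_sum]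
    rw [hSx, g0]
  rw [hsum]
  simp only [hpf, hHf]
  rw [sum_eval n x (fun i j => q x i j) (1 + g⁻¹)⁻¹ ((1 + g⁻¹) ^ (-(1/2) : ℝ)) k β lam]
  rw [hSx]
  rw [geom_eval n hn r0 ‖x‖ (‖x‖ / r0) g k β (1 + g⁻¹)⁻¹ ((1 + g⁻¹) ^ (-(1/2) : ℝ))
    hr0 hx rfl hgdef hkdef hβdef rfl rfl]
  -- now bound the q-term
  have hQnn : 0 ≤ Real.sqrt (∑ i, ∑ j, (q x i j) ^ 2) := Real.sqrt_nonneg _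
  have hR : 0 < r0 ^ ((n : ℝ) - 2) * ‖x‖ ^ ((1 : ℝ) - n) := by positivity
  have hq := hq_bound x hx
  have htv : (1 + g⁻¹)⁻¹ * k ^ 2 * (∑ i, x i ^ 2) = (g + 1)⁻¹ := by
    rw [hSx, mul_assoc, g0, ← mul_inv]
    congr 1
    field_simp
  have ht0 : 0 ≤ (1 + g⁻¹)⁻¹ * k ^ 2 * (∑ i, x i ^ 2) := by
    rw [htv]; positivity
  have ht2 : (1 + g⁻¹)⁻¹ * k ^ 2 * (∑ i, x i ^ 2) ≤ 2 := by
    rw [htv]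
    have h1 : (g + 1)⁻¹ ≤ 1 := by
      rw [inv_le_one_iff₀]
      right; linarith
    linarith
  have hCS := qCS n x (fun i j => q x i j) (1 + g⁻¹)⁻¹ k ht0 ht2
  have hsqn : Real.sqrt n ≤ (n : ℝ) := by
    have hn1 : (1 : ℝ) ≤ (n : ℝ) := by exact_mod_cast (by omega : 1 ≤ n)
    have h1 : (n : ℝ) ≤ (n : ℝ) ^ 2 := by nlinarith
    calc Real.sqrt n ≤ Real.sqrt ((n : ℝ) ^ 2) := Real.sqrt_le_sqrt h1
    _ = n := Real.sqrt_sq (by positivity)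
  have h5 : |lam * (∑ i, ∑ j,
      ((if i = j then (1:ℝ) else 0) - (1 + g⁻¹)⁻¹ * (k * x i) * (k * x j)) * q x i j)|
      ≤ Real.sqrt n * Real.sqrt (∑ i, ∑ j, (q x i j) ^ 2) := by
    rw [abs_mul]
    calc |lam| * _ ≤ 1 * |(∑ i, ∑ j,
        ((if i = j then (1:ℝ) else 0) - (1 + g⁻¹)⁻¹ * (k * x i) * (k * x j)) * q x i j)| :=
      mul_le_mul_of_nonneg_right hlam (abs_nonneg _)
    _ = _ := one_mul _
    _ ≤ _ := hCS
  have h6 : Real.sqrt n * Real.sqrt (∑ i, ∑ j, (q x i j) ^ 2)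
      ≤ (n : ℝ) * Real.sqrt (∑ i, ∑ j, (q x i j) ^ 2) :=
    mul_le_mul_of_nonneg_right hsqn hQnn
  have h7 : |lam * (∑ i, ∑ j,
      ((if i = j then (1:ℝ) else 0) - (1 + g⁻¹)⁻¹ * (k * x i) * (k * x j)) * q x i j)|
      < r0 ^ ((n : ℝ) - 2) * ‖x‖ ^ ((1 : ℝ) - n) := lt_of_le_of_lt (h5.trans h6) hq
  have h8 := neg_abs_le (lam * (∑ i, ∑ j,
      ((if i = j then (1:ℝ) else 0) - (1 + g⁻¹)⁻¹ * (k * x i) * (k * x j)) * q x i j))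
  linarith
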